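/- Let 2 ≤ r and 2 ≤ c. Then: (a) every (r × c, v)-triple array with v > max(r, c) satisfies v ≥ r + c − 1; (b) every (r × c, v)-balanced grid satisfies v ≤ r + c − 1; (c) every (r × c, r + c − 1)-triple array is an (r × c, r + c − 1)-balanced grid, and every (r × c, r + c − 1)-balanced grid is an (r × c, r + c − 1)-triple array. -/

import Mathlib

open Finset
set_option maxHeartbeats 1000000

/-- An `r × c` row-column design on `v` symbols is binary if no symbol occurs
twice in any row or in any column. -/
def IsBinaryDesign {r c v : ℕ} (T : Fin r × Fin c → Fin v) : Prop :=
  (∀ (i : Fin r) (j j' : Fin c), j ≠ j' → T (i, j) ≠ T (i, j')) ∧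
  (∀ (j : Fin c) (i i' : Fin r), i ≠ i' → T (i, j) ≠ T (i', j))

/-- The replication number of a symbol `s`: the number of cells containing `s`. -/
def replNum {r c v : ℕ} (T : Fin r × Fin c → Fin v) (s : Fin v) : ℕ :=
  (Finset.univ.filter (fun p : Fin r × Fin c => T p = s)).card

/-- The average replication number `e = rc/v` as a rational number. -/
def avgRepl (r c v : ℕ) : ℚ := ((r : ℚ) * (c : ℚ)) / (v : ℚ)

/-- A design is equireplicate if `e = rc/v` is an integer and every symbol has
replication number `e`. -/
def IsEquireplicate {r c v : ℕ} (T : Fin r × Fin c → Fin v) : Prop :=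
  (avgRepl r c v).den = 1 ∧ ∀ s : Fin v, (replNum T s : ℚ) = avgRepl r c v

/-- A design is near equireplicate if `e = rc/v` is not an integer and every symbol
has replication number `⌊e⌋` or `⌈e⌉`. -/
def IsNearEquireplicate {r c v : ℕ} (T : Fin r × Fin c → Fin v) : Prop :=
  (avgRepl r c v).den ≠ 1 ∧
  ∀ s : Fin v, (replNum T s : ℤ) = ⌊avgRepl r c v⌋ ∨ (replNum T s : ℤ) = ⌈avgRepl r c v⌉

/-- The set of symbols occurring in row `i`. -/
def rowSet {r c v : ℕ} (T : Fin r × Fin c → Fin v) (i : Fin r) : Finset (Fin v) :=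
  Finset.univ.image (fun j : Fin c => T (i, j))

/-- The set of symbols occurring in column `j`. -/
def colSet {r c v : ℕ} (T : Fin r × Fin c → Fin v) (j : Fin c) : Finset (Fin v) :=
  Finset.univ.image (fun i : Fin r => T (i, j))

/-- Average row-column intersection size `λ_rc`. -/
def lamRC {r c v : ℕ} (T : Fin r × Fin c → Fin v) : ℚ :=
  (∑ i : Fin r, ∑ j : Fin c, ((rowSet T i ∩ colSet T j).card : ℚ)) / ((r : ℚ) * (c : ℚ))

/-- Average row-row intersection size `λ_rr`. -/
def lamRR {r c v : ℕ} (T : Fin r × Fin c → Fin v) : ℚ :=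
  (∑ p ∈ Finset.univ.filter (fun p : Fin r × Fin r => p.1 < p.2),
      ((rowSet T p.1 ∩ rowSet T p.2).card : ℚ)) / ((r : ℚ) * ((r : ℚ) - 1) / 2)

/-- Average column-column intersection size `λ_cc`. -/
def lamCC {r c v : ℕ} (T : Fin r × Fin c → Fin v) : ℚ :=
  (∑ p ∈ Finset.univ.filter (fun p : Fin c × Fin c => p.1 < p.2),
      ((colSet T p.1 ∩ colSet T p.2).card : ℚ)) / ((c : ℚ) * ((c : ℚ) - 1) / 2)

/-- An `(r × c, v)`-near triple array. -/
def IsNearTripleArray {r c v : ℕ} (T : Fin r × Fin c → Fin v) : Prop :=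
  IsBinaryDesign T ∧ (IsEquireplicate T ∨ IsNearEquireplicate T) ∧
  (∀ (i : Fin r) (j : Fin c),
    ((rowSet T i ∩ colSet T j).card : ℤ) = ⌊lamRC T⌋ ∨
    ((rowSet T i ∩ colSet T j).card : ℤ) = ⌈lamRC T⌉) ∧
  (∀ i j : Fin r, i ≠ j →
    ((rowSet T i ∩ rowSet T j).card : ℤ) = ⌊lamRR T⌋ ∨
    ((rowSet T i ∩ rowSet T j).card : ℤ) = ⌈lamRR T⌉) ∧
  (∀ i j : Fin c, i ≠ j →
    ((colSet T i ∩ colSet T j).card : ℤ) = ⌊lamCC T⌋ ∨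
    ((colSet T i ∩ colSet T j).card : ℤ) = ⌈lamCC T⌉)

/-- `S(n, m) = n·m(m−1)/2 + n·(m − ⌊m⌋)(⌈m⌉ − m)/2`. -/
def Sfun (n : ℕ) (m : ℚ) : ℚ :=
  (n : ℚ) * (m * (m - 1)) / 2 + (n : ℚ) * ((m - (⌊m⌋ : ℚ)) * ((⌈m⌉ : ℚ) - m)) / 2

/-- The number of rows containing both symbols `a` and `b`. -/
def rowPairCount {r c v : ℕ} (T : Fin r × Fin c → Fin v) (a b : Fin v) : ℕ :=
  (Finset.univ.filter (fun i : Fin r => a ∈ rowSet T i ∧ b ∈ rowSet T i)).card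

/-- The number of columns containing both symbols `a` and `b`. -/
def colPairCount {r c v : ℕ} (T : Fin r × Fin c → Fin v) (a b : Fin v) : ℕ :=
  (Finset.univ.filter (fun j : Fin c => a ∈ colSet T j ∧ b ∈ colSet T j)).card

/-- The average covering number `μ = e(r + c − 2)/(v − 1)`. -/
def muGrid (r c v : ℕ) : ℚ :=
  avgRepl r c v * ((r : ℚ) + (c : ℚ) - 2) / ((v : ℚ) - 1)

/-- An `(r × c, v)`-triple array: binary, equireplicate, with constant row-column,
row-row and column-column intersection sizes. -/
def IsTripleArray {r c v : ℕ} (T : Fin r × Fin c → Fin v) : Prop :=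
  IsBinaryDesign T ∧ IsEquireplicate T ∧
  (∃ l : ℕ, ∀ (i : Fin r) (j : Fin c), (rowSet T i ∩ colSet T j).card = l) ∧
  (∃ l : ℕ, ∀ i j : Fin r, i ≠ j → (rowSet T i ∩ rowSet T j).card = l) ∧
  (∃ l : ℕ, ∀ i j : Fin c, i ≠ j → (colSet T i ∩ colSet T j).card = l)

/-- An `(r × c, v)`-balanced grid: binary, `μ` an integer, and every pair of
distinct symbols is covered by exactly `μ` rows and columns in total. -/
def IsBalancedGrid {r c v : ℕ} (T : Fin r × Fin c → Fin v) : Prop :=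
  IsBinaryDesign T ∧ (muGrid r c v).den = 1 ∧
  ∀ a b : Fin v, a ≠ b →
    ((rowPairCount T a b + colPairCount T a b : ℚ) = muGrid r c v)

namespace TBG

variable {r c v : ℕ}

lemma sum_ind (A : Finset (Fin v)) : (∑ a, if a ∈ A then (1:ℚ) else 0) = A.card := by
  simp [Finset.sum_boole, Finset.filter_mem_eq_inter]

lemma ite_mul_ite (P Q : Prop) [Decidable P] [Decidable Q] :
    (if P then (1:ℚ) else 0) * (if Q then 1 else 0) = if P ∧ Q then 1 else 0 := by
  by_cases hP : P <;> by_cases hQ : Q <;> simp [hP, hQ]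

lemma sum_ind_mul (A B : Finset (Fin v)) :
    (∑ a, (if a ∈ A then (1:ℚ) else 0) * (if a ∈ B then 1 else 0)) = ((A ∩ B).card : ℚ) := by
  rw [← sum_ind (A ∩ B)]
  refine Finset.sum_congr rfl fun a _ => ?_
  rw [ite_mul_ite]
  simp [Finset.mem_inter]

/-- number of rows containing a -/
def krow (T : Fin r × Fin c → Fin v) (a : Fin v) : ℕ :=
  (Finset.univ.filter (fun i : Fin r => a ∈ rowSet T i)).card

def kcol (T : Fin r × Fin c → Fin v) (a : Fin v) : ℕ :=
  (Finset.univ.filter (fun j : Fin c => a ∈ colSet T j)).card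

lemma krow_cast (T : Fin r × Fin c → Fin v) (a : Fin v) :
    ((krow T a : ℚ)) = ∑ i, if a ∈ rowSet T i then (1:ℚ) else 0 := by
  rw [Finset.sum_boole]; rfl

lemma kcol_cast (T : Fin r × Fin c → Fin v) (a : Fin v) :
    ((kcol T a : ℚ)) = ∑ j, if a ∈ colSet T j then (1:ℚ) else 0 := by
  rw [Finset.sum_boole]; rfl

lemma mem_rowSet {T : Fin r × Fin c → Fin v} {a : Fin v} {i : Fin r} :
    a ∈ rowSet T i ↔ ∃ j, T (i, j) = a := by simp [rowSet]

lemma mem_colSet {T : Fin r × Fin c → Fin v} {a : Fin v} {j : Fin c} :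
    a ∈ colSet T j ↔ ∃ i, T (i, j) = a := by simp [colSet]

lemma rowSet_card {T : Fin r × Fin c → Fin v} (hb : IsBinaryDesign T) (i : Fin r) :
    (rowSet T i).card = c := by
  rw [rowSet, Finset.card_image_of_injective _ (fun j j' h => ?_), Finset.card_univ,
    Fintype.card_fin]
  by_contra hne
  exact hb.1 i j j' hne h

lemma colSet_card {T : Fin r × Fin c → Fin v} (hb : IsBinaryDesign T) (j : Fin c) :
    (colSet T j).card = r := by
  rw [colSet, Finset.card_image_of_injective _ (fun i i' h => ?_), Finset.card_univ,
    Fintype.card_fin]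
  by_contra hne
  exact hb.2 j i i' hne h

lemma repl_eq_krow {T : Fin r × Fin c → Fin v} (hb : IsBinaryDesign T) (a : Fin v) :
    replNum T a = krow T a := by
  unfold replNum krow
  apply Finset.card_bij (fun p _ => p.1)
  · intro p hp
    simp only [Finset.mem_filter, Finset.mem_univ, true_and] at hp ⊢
    exact mem_rowSet.2 ⟨p.2, by rw [← hp]⟩
  · intro p hp q hq h
    simp only [Finset.mem_filter, Finset.mem_univ, true_and] at hp hq
    have h2 : p.2 = q.2 := by
      by_contra hne
      exact hb.1 p.1 p.2 q.2 hne (by rw [Prod.mk.eta, hp, h, Prod.mk.eta]; exact hq.symm)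
    exact Prod.ext h h2
  · intro i hi
    simp only [Finset.mem_filter, Finset.mem_univ, true_and] at hi
    obtain ⟨j, hj⟩ := mem_rowSet.1 hi
    exact ⟨(i, j), by simp [hj], rfl⟩

lemma repl_eq_kcol {T : Fin r × Fin c → Fin v} (hb : IsBinaryDesign T) (a : Fin v) :
    replNum T a = kcol T a := by
  unfold replNum kcol
  apply Finset.card_bij (fun p _ => p.2)
  · intro p hp
    simp only [Finset.mem_filter, Finset.mem_univ, true_and] at hp ⊢
    exact mem_colSet.2 ⟨p.1, by rw [← hp]⟩
  · intro p hp q hq h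
    simp only [Finset.mem_filter, Finset.mem_univ, true_and] at hp hq
    have h1 : p.1 = q.1 := by
      by_contra hne
      exact hb.2 p.2 p.1 q.1 hne (by rw [Prod.mk.eta, hp, h, Prod.mk.eta]; exact hq.symm)
    exact Prod.ext h1 h
  · intro j hj
    simp only [Finset.mem_filter, Finset.mem_univ, true_and] at hj
    obtain ⟨i, hi⟩ := mem_colSet.1 hj
    exact ⟨(i, j), by simp [hi], rfl⟩



open Matrix
variable {r c v : ℕ}

/-- combined symbol-vs-(rows ⊕ columns) incidence matrix -/
def XM (T : Fin r × Fin c → Fin v) : Matrix (Fin v) (Fin r ⊕ Fin c) ℚ :=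
  Matrix.of fun a => Sum.elim (fun i => if a ∈ rowSet T i then (1:ℚ) else 0)
    (fun j => if a ∈ colSet T j then (1:ℚ) else 0)

def wV (r c : ℕ) : Fin r ⊕ Fin c → ℚ := Sum.elim (fun _ => 1) (fun _ => -1)

@[simp] lemma XM_apply_inl (T : Fin r × Fin c → Fin v) (a : Fin v) (i : Fin r) :
    XM T a (Sum.inl i) = if a ∈ rowSet T i then (1:ℚ) else 0 := rfl

@[simp] lemma XM_apply_inr (T : Fin r × Fin c → Fin v) (a : Fin v) (j : Fin c) :
    XM T a (Sum.inr j) = if a ∈ colSet T j then (1:ℚ) else 0 := rfl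

/-- Gram matrix entries -/
lemma G_ll (T : Fin r × Fin c → Fin v) (i i' : Fin r) :
    ((XM T)ᵀ * XM T) (Sum.inl i) (Sum.inl i') = ((rowSet T i ∩ rowSet T i').card : ℚ) := by
  rw [Matrix.mul_apply, ← sum_ind_mul]
  rfl

lemma G_lr (T : Fin r × Fin c → Fin v) (i : Fin r) (j : Fin c) :
    ((XM T)ᵀ * XM T) (Sum.inl i) (Sum.inr j) = ((rowSet T i ∩ colSet T j).card : ℚ) := by
  rw [Matrix.mul_apply, ← sum_ind_mul]
  rfl

lemma G_rl (T : Fin r × Fin c → Fin v) (j : Fin c) (i : Fin r) :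
    ((XM T)ᵀ * XM T) (Sum.inr j) (Sum.inl i) = ((rowSet T i ∩ colSet T j).card : ℚ) := by
  rw [Matrix.mul_apply, ← sum_ind_mul]
  exact Finset.sum_congr rfl fun a _ => mul_comm _ _

lemma G_rr (T : Fin r × Fin c → Fin v) (j j' : Fin c) :
    ((XM T)ᵀ * XM T) (Sum.inr j) (Sum.inr j') = ((colSet T j ∩ colSet T j').card : ℚ) := by
  rw [Matrix.mul_apply, ← sum_ind_mul]
  rfl

/-- M = X Xᵀ entries -/
lemma M_entry (T : Fin r × Fin c → Fin v) (a b : Fin v) :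
    (XM T * (XM T)ᵀ) a b = (rowPairCount T a b : ℚ) + (colPairCount T a b : ℚ) := by
  rw [Matrix.mul_apply, Fintype.sum_sum_type]
  have h1 : (∑ i : Fin r, XM T a (Sum.inl i) * (XM T)ᵀ (Sum.inl i) b)
      = (rowPairCount T a b : ℚ) := by
    rw [rowPairCount, ← Finset.sum_boole]
    refine Finset.sum_congr rfl fun i _ => ?_
    rw [Matrix.transpose_apply, XM_apply_inl, XM_apply_inl, ite_mul_ite]
  have h2 : (∑ j : Fin c, XM T a (Sum.inr j) * (XM T)ᵀ (Sum.inr j) b)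
      = (colPairCount T a b : ℚ) := by
    rw [colPairCount, ← Finset.sum_boole]
    refine Finset.sum_congr rfl fun j _ => ?_
    rw [Matrix.transpose_apply, XM_apply_inr, XM_apply_inr, ite_mul_ite]
  rw [h1, h2]

lemma XM_mulVec_wV {T : Fin r × Fin c → Fin v} (hb : IsBinaryDesign T) :
    (XM T).mulVec (wV r c) = 0 := by
  funext a
  rw [Matrix.mulVec, dotProduct, Fintype.sum_sum_type]
  have h1 : (∑ i : Fin r, XM T a (Sum.inl i) * wV r c (Sum.inl i)) = (krow T a : ℚ) := by
    rw [krow_cast]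
    refine Finset.sum_congr rfl fun i _ => ?_
    simp [wV]
  have h2 : (∑ j : Fin c, XM T a (Sum.inr j) * wV r c (Sum.inr j)) = -(kcol T a : ℚ) := by
    rw [kcol_cast, ← Finset.sum_neg_distrib]
    refine Finset.sum_congr rfl fun j _ => ?_
    simp [wV]
  rw [h1, h2, ← repl_eq_krow hb, ← repl_eq_kcol hb]
  simp

/-- column sums of XM -/
lemma XM_colsum_inl {T : Fin r × Fin c → Fin v} (hb : IsBinaryDesign T) (i : Fin r) :
    (∑ a, XM T a (Sum.inl i)) = (c : ℚ) := by
  simp only [XM_apply_inl]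
  rw [sum_ind, rowSet_card hb]

lemma XM_colsum_inr {T : Fin r × Fin c → Fin v} (hb : IsBinaryDesign T) (j : Fin c) :
    (∑ a, XM T a (Sum.inr j)) = (r : ℚ) := by
  simp only [XM_apply_inr]
  rw [sum_ind, colSet_card hb]

lemma mulVec_single_old {m n : Type*} [Fintype n] [DecidableEq n] (M : Matrix m n ℚ)
    (j : n) (x : ℚ) : M *ᵥ Pi.single j x = fun i => M i j * x :=
  funext fun _ => dotProduct_single _ _ _

/-- sum of entries of X *ᵥ y -/
lemma sum_XM_mulVec {T : Fin r × Fin c → Fin v} (hb : IsBinaryDesign T)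
    (y : Fin r ⊕ Fin c → ℚ) :
    (∑ a, ((XM T).mulVec y) a)
      = (c : ℚ) * (∑ i, y (Sum.inl i)) + (r : ℚ) * (∑ j, y (Sum.inr j)) := by
  simp only [Matrix.mulVec, dotProduct]
  rw [Finset.sum_comm]
  rw [Fintype.sum_sum_type]
  have h1 : (∑ i : Fin r, ∑ a, XM T a (Sum.inl i) * y (Sum.inl i))
      = (c:ℚ) * ∑ i, y (Sum.inl i) := by
    rw [Finset.mul_sum]
    refine Finset.sum_congr rfl fun i _ => ?_
    rw [← Finset.sum_mul, XM_colsum_inl hb]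
  have h2 : (∑ j : Fin c, ∑ a, XM T a (Sum.inr j) * y (Sum.inr j))
      = (r:ℚ) * ∑ j, y (Sum.inr j) := by
    rw [Finset.mul_sum]
    refine Finset.sum_congr rfl fun j _ => ?_
    rw [← Finset.sum_mul, XM_colsum_inr hb]
  rw [h1, h2]



variable {r c v : ℕ}

lemma G_mulVec_inl_const {T : Fin r × Fin c → Fin v} (hb : IsBinaryDesign T) {L1 L2 : ℚ}
    (hL1 : ∀ (i : Fin r) (j : Fin c), ((rowSet T i ∩ colSet T j).card : ℚ) = L1)
    (hL2 : ∀ i i' : Fin r, i ≠ i' → ((rowSet T i ∩ rowSet T i').card : ℚ) = L2)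
    (y : Fin r ⊕ Fin c → ℚ) (i : Fin r) :
    (((XM T)ᵀ * XM T).mulVec y) (Sum.inl i)
      = ((c:ℚ) - L2) * y (Sum.inl i) + L2 * (∑ i', y (Sum.inl i'))
        + L1 * (∑ j, y (Sum.inr j)) := by
  rw [Matrix.mulVec, dotProduct, Fintype.sum_sum_type]
  have h2 : (∑ j, ((XM T)ᵀ * XM T) (Sum.inl i) (Sum.inr j) * y (Sum.inr j))
      = L1 * (∑ j, y (Sum.inr j)) := by
    rw [Finset.mul_sum]
    exact Finset.sum_congr rfl fun j _ => by rw [G_lr, hL1]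
  have h1 : (∑ i', ((XM T)ᵀ * XM T) (Sum.inl i) (Sum.inl i') * y (Sum.inl i'))
      = ((c:ℚ) - L2) * y (Sum.inl i) + L2 * (∑ i', y (Sum.inl i')) := by
    rw [← Finset.add_sum_erase _ _ (Finset.mem_univ i)]
    have hdiag : ((XM T)ᵀ * XM T) (Sum.inl i) (Sum.inl i) = (c:ℚ) := by
      rw [G_ll, Finset.inter_self, rowSet_card hb]
    have herase : (∑ i' ∈ Finset.univ.erase i,
        ((XM T)ᵀ * XM T) (Sum.inl i) (Sum.inl i') * y (Sum.inl i'))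
        = L2 * ((∑ i', y (Sum.inl i')) - y (Sum.inl i)) := by
      rw [← Finset.sum_erase_eq_sub (Finset.mem_univ i), Finset.mul_sum]
      refine Finset.sum_congr rfl fun i' hi' => ?_
      rw [G_ll, hL2 i i' (Ne.symm (Finset.mem_erase.1 hi').1)]
    rw [hdiag, herase]
    ring
  rw [h1, h2]

lemma G_mulVec_inr_const {T : Fin r × Fin c → Fin v} (hb : IsBinaryDesign T) {L1 L3 : ℚ}
    (hL1 : ∀ (i : Fin r) (j : Fin c), ((rowSet T i ∩ colSet T j).card : ℚ) = L1)
    (hL3 : ∀ j j' : Fin c, j ≠ j' → ((colSet T j ∩ colSet T j').card : ℚ) = L3)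
    (y : Fin r ⊕ Fin c → ℚ) (j : Fin c) :
    (((XM T)ᵀ * XM T).mulVec y) (Sum.inr j)
      = ((r:ℚ) - L3) * y (Sum.inr j) + L3 * (∑ j', y (Sum.inr j'))
        + L1 * (∑ i, y (Sum.inl i)) := by
  rw [Matrix.mulVec, dotProduct, Fintype.sum_sum_type]
  have h2 : (∑ i, ((XM T)ᵀ * XM T) (Sum.inr j) (Sum.inl i) * y (Sum.inl i))
      = L1 * (∑ i, y (Sum.inl i)) := by
    rw [Finset.mul_sum]
    exact Finset.sum_congr rfl fun i _ => by rw [G_rl, hL1]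
  have h1 : (∑ j', ((XM T)ᵀ * XM T) (Sum.inr j) (Sum.inr j') * y (Sum.inr j'))
      = ((r:ℚ) - L3) * y (Sum.inr j) + L3 * (∑ j', y (Sum.inr j')) := by
    rw [← Finset.add_sum_erase _ _ (Finset.mem_univ j)]
    have hdiag : ((XM T)ᵀ * XM T) (Sum.inr j) (Sum.inr j) = (r:ℚ) := by
      rw [G_rr, Finset.inter_self, colSet_card hb]
    have herase : (∑ j' ∈ Finset.univ.erase j,
        ((XM T)ᵀ * XM T) (Sum.inr j) (Sum.inr j') * y (Sum.inr j'))
        = L3 * ((∑ j', y (Sum.inr j')) - y (Sum.inr j)) := by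
      rw [← Finset.sum_erase_eq_sub (Finset.mem_univ j), Finset.mul_sum]
      refine Finset.sum_congr rfl fun j' hj' => ?_
      rw [G_rr, hL3 j j' (Ne.symm (Finset.mem_erase.1 hj').1)]
    rw [hdiag, herase]
    ring
  rw [h1, h2]
  ring

lemma sum_inter_row_col {T : Fin r × Fin c → Fin v} (hb : IsBinaryDesign T) {e : ℚ}
    (hkc : ∀ a, (kcol T a : ℚ) = e) (i : Fin r) :
    (∑ j, ((rowSet T i ∩ colSet T j).card : ℚ)) = (c : ℚ) * e := by
  calc (∑ j, ((rowSet T i ∩ colSet T j).card : ℚ))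
      = ∑ j, ∑ a, (if a ∈ rowSet T i then (1:ℚ) else 0) * (if a ∈ colSet T j then 1 else 0) :=
        Finset.sum_congr rfl fun j _ => (sum_ind_mul _ _).symm
    _ = ∑ a, ∑ j, (if a ∈ rowSet T i then (1:ℚ) else 0) * (if a ∈ colSet T j then 1 else 0) :=
        Finset.sum_comm
    _ = ∑ a, (if a ∈ rowSet T i then (1:ℚ) else 0) * e := by
        refine Finset.sum_congr rfl fun a _ => ?_
        rw [← Finset.mul_sum, ← kcol_cast, hkc a]
    _ = (c : ℚ) * e := by
        rw [← Finset.sum_mul, sum_ind, rowSet_card hb, mul_comm]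

lemma sum_inter_row_row {T : Fin r × Fin c → Fin v} (hb : IsBinaryDesign T) {e : ℚ}
    (hkr : ∀ a, (krow T a : ℚ) = e) (i : Fin r) :
    (∑ i', ((rowSet T i ∩ rowSet T i').card : ℚ)) = (c : ℚ) * e := by
  calc (∑ i', ((rowSet T i ∩ rowSet T i').card : ℚ))
      = ∑ i', ∑ a, (if a ∈ rowSet T i then (1:ℚ) else 0) * (if a ∈ rowSet T i' then 1 else 0) :=
        Finset.sum_congr rfl fun i' _ => (sum_ind_mul _ _).symm
    _ = ∑ a, ∑ i', (if a ∈ rowSet T i then (1:ℚ) else 0) * (if a ∈ rowSet T i' then 1 else 0) :=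
        Finset.sum_comm
    _ = ∑ a, (if a ∈ rowSet T i then (1:ℚ) else 0) * e := by
        refine Finset.sum_congr rfl fun a _ => ?_
        rw [← Finset.mul_sum, ← krow_cast, hkr a]
    _ = (c : ℚ) * e := by
        rw [← Finset.sum_mul, sum_ind, rowSet_card hb, mul_comm]

lemma sum_inter_col_col {T : Fin r × Fin c → Fin v} (hb : IsBinaryDesign T) {e : ℚ}
    (hkc : ∀ a, (kcol T a : ℚ) = e) (j : Fin c) :
    (∑ j', ((colSet T j ∩ colSet T j').card : ℚ)) = (r : ℚ) * e := by
  calc (∑ j', ((colSet T j ∩ colSet T j').card : ℚ))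
      = ∑ j', ∑ a, (if a ∈ colSet T j then (1:ℚ) else 0) * (if a ∈ colSet T j' then 1 else 0) :=
        Finset.sum_congr rfl fun j' _ => (sum_ind_mul _ _).symm
    _ = ∑ a, ∑ j', (if a ∈ colSet T j then (1:ℚ) else 0) * (if a ∈ colSet T j' then 1 else 0) :=
        Finset.sum_comm
    _ = ∑ a, (if a ∈ colSet T j then (1:ℚ) else 0) * e := by
        refine Finset.sum_congr rfl fun a _ => ?_
        rw [← Finset.mul_sum, ← kcol_cast, hkc a]
    _ = (r : ℚ) * e := by
        rw [← Finset.sum_mul, sum_ind, colSet_card hb, mul_comm]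

/-- constant value over the erased set forces `(n-1) * L` sum -/
lemma sum_erase_const {α : Type*} [Fintype α] [DecidableEq α] (x : α) (f : α → ℚ) (L : ℚ)
    (h : ∀ y, y ≠ x → f y = L) :
    (∑ y ∈ Finset.univ.erase x, f y) = ((Fintype.card α : ℚ) - 1) * L := by
  rw [Finset.sum_congr rfl (fun y hy => h y (Finset.mem_erase.1 hy).1), Finset.sum_const,
    Finset.card_erase_of_mem (Finset.mem_univ x), Finset.card_univ, nsmul_eq_mul]
  have h1 : (1:ℕ) ≤ Fintype.card α := Fintype.card_pos_iff.2 ⟨x⟩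
  push_cast [Nat.cast_sub h1]
  ring

lemma equi_krow {T : Fin r × Fin c → Fin v} (hb : IsBinaryDesign T)
    (he : IsEquireplicate T) (a : Fin v) : (krow T a : ℚ) = avgRepl r c v := by
  rw [← repl_eq_krow hb]; exact he.2 a

lemma equi_kcol {T : Fin r × Fin c → Fin v} (hb : IsBinaryDesign T)
    (he : IsEquireplicate T) (a : Fin v) : (kcol T a : ℚ) = avgRepl r c v := by
  rw [← repl_eq_kcol hb]; exact he.2 a

lemma avgRepl_pos (hr0 : 0 < r) (hc0 : 0 < c) (hv0 : 0 < v) : 0 < avgRepl r c v := by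
  unfold avgRepl
  have h1 : (0:ℚ) < r := by exact_mod_cast hr0
  have h2 : (0:ℚ) < c := by exact_mod_cast hc0
  have h3 : (0:ℚ) < v := by exact_mod_cast hv0
  positivity

lemma avgRepl_lt_r (hr0 : 0 < r) (hvc : c < v) : avgRepl r c v < r := by
  have hv0 : (0:ℚ) < v := by exact_mod_cast Nat.lt_of_le_of_lt (Nat.zero_le c) hvc
  unfold avgRepl
  rw [div_lt_iff₀ hv0]
  have h1 : (c:ℚ) < v := by exact_mod_cast hvc
  have h2 : (0:ℚ) < r := by exact_mod_cast hr0
  nlinarith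

lemma avgRepl_lt_c (hc0 : 0 < c) (hvr : r < v) : avgRepl r c v < c := by
  have hv0 : (0:ℚ) < v := by exact_mod_cast Nat.lt_of_le_of_lt (Nat.zero_le r) hvr
  unfold avgRepl
  rw [div_lt_iff₀ hv0]
  have h1 : (r:ℚ) < v := by exact_mod_cast hvr
  have h2 : (0:ℚ) < c := by exact_mod_cast hc0
  nlinarith

lemma triple_L1 {T : Fin r × Fin c → Fin v} (hr : 2 ≤ r) (hc : 2 ≤ c)
    (hb : IsBinaryDesign T) (he : IsEquireplicate T) {l1 : ℕ}
    (hl1 : ∀ (i : Fin r) (j : Fin c), (rowSet T i ∩ colSet T j).card = l1) :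
    (l1 : ℚ) = avgRepl r c v := by
  have i0 : Fin r := ⟨0, by omega⟩
  have key := sum_inter_row_col hb (equi_kcol hb he) i0
  rw [Finset.sum_congr rfl (fun j _ => by rw [hl1 i0 j]), Finset.sum_const, Finset.card_univ,
    Fintype.card_fin, nsmul_eq_mul] at key
  have hc0 : (c:ℚ) ≠ 0 := Nat.cast_ne_zero.2 (by omega)
  exact mul_left_cancel₀ hc0 key

lemma triple_L2 {T : Fin r × Fin c → Fin v} (hr : 2 ≤ r) (hc : 2 ≤ c)
    (hb : IsBinaryDesign T) (he : IsEquireplicate T) {l2 : ℕ}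
    (hl2 : ∀ i i' : Fin r, i ≠ i' → (rowSet T i ∩ rowSet T i').card = l2) :
    ((r:ℚ) - 1) * l2 = (c:ℚ) * avgRepl r c v - c := by
  have i0 : Fin r := ⟨0, by omega⟩
  have key := sum_inter_row_row hb (equi_krow hb he) i0
  rw [← Finset.add_sum_erase _ _ (Finset.mem_univ i0), Finset.inter_self,
    rowSet_card hb] at key
  have herase := sum_erase_const i0 (fun i' => ((rowSet T i0 ∩ rowSet T i').card : ℚ))
    (l2:ℚ) (fun i' hi' => by show ((rowSet T i0 ∩ rowSet T i').card : ℚ) = l2; rw [hl2 i0 i' (Ne.symm hi')])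
  rw [herase, Fintype.card_fin] at key
  linarith

lemma triple_L3 {T : Fin r × Fin c → Fin v} (hr : 2 ≤ r) (hc : 2 ≤ c)
    (hb : IsBinaryDesign T) (he : IsEquireplicate T) {l3 : ℕ}
    (hl3 : ∀ j j' : Fin c, j ≠ j' → (colSet T j ∩ colSet T j').card = l3) :
    ((c:ℚ) - 1) * l3 = (r:ℚ) * avgRepl r c v - r := by
  have j0 : Fin c := ⟨0, by omega⟩
  have key := sum_inter_col_col hb (equi_kcol hb he) j0
  rw [← Finset.add_sum_erase _ _ (Finset.mem_univ j0), Finset.inter_self,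
    colSet_card hb] at key
  have herase := sum_erase_const j0 (fun j' => ((colSet T j0 ∩ colSet T j').card : ℚ))
    (l3:ℚ) (fun j' hj' => by show ((colSet T j0 ∩ colSet T j').card : ℚ) = l3; rw [hl3 j0 j' (Ne.symm hj')])
  rw [herase, Fintype.card_fin] at key
  linarith

lemma triple_ker {T : Fin r × Fin c → Fin v} (hr : 2 ≤ r) (hc : 2 ≤ c)
    (hT : IsTripleArray T) (hvr : r < v) (hvc : c < v) :
    LinearMap.ker (XM T).mulVecLin = Submodule.span ℚ {wV r c} := by
  obtain ⟨hb, he, ⟨l1, hl1⟩, ⟨l2, hl2⟩, ⟨l3, hl3⟩⟩ := hT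
  set e := avgRepl r c v with hedef
  have hL1 := triple_L1 hr hc hb he hl1
  have hL2 := triple_L2 hr hc hb he hl2
  have hL3 := triple_L3 hr hc hb he hl3
  have he_pos : 0 < e := avgRepl_pos (by omega) (by omega) (by omega)
  have heltr : e < r := avgRepl_lt_r (by omega) hvc
  have heltc : e < c := avgRepl_lt_c (by omega) hvr
  have hr1 : (1:ℚ) < r := by exact_mod_cast (show 1 < r by omega)
  have hc1 : (1:ℚ) < c := by exact_mod_cast (show 1 < c by omega)
  have hl2c : (l2:ℚ) < c := by nlinarith
  have hl3r : (l3:ℚ) < r := by nlinarith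
  have hc0 : (0:ℚ) < c := by linarith
  have hr0 : (0:ℚ) < r := by linarith
  apply le_antisymm
  · intro y hy
    rw [LinearMap.mem_ker, Matrix.mulVecLin_apply] at hy
    have hGy : ((XM T)ᵀ * XM T).mulVec y = 0 := by
      rw [← Matrix.mulVec_mulVec, hy, Matrix.mulVec_zero]
    have hl1' : ∀ (i : Fin r) (j : Fin c), ((rowSet T i ∩ colSet T j).card : ℚ) = (l1:ℚ) :=
      fun i j => by rw [hl1 i j]
    have hl2' : ∀ i i' : Fin r, i ≠ i' → ((rowSet T i ∩ rowSet T i').card : ℚ) = (l2:ℚ) :=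
      fun i i' h => by rw [hl2 i i' h]
    have hl3' : ∀ j j' : Fin c, j ≠ j' → ((colSet T j ∩ colSet T j').card : ℚ) = (l3:ℚ) :=
      fun j j' h => by rw [hl3 j j' h]
    have hrowEq : ∀ i, ((c:ℚ) - l2) * y (Sum.inl i) + l2 * (∑ i', y (Sum.inl i'))
        + l1 * (∑ j, y (Sum.inr j)) = 0 := fun i => by
      have h := congrFun hGy (Sum.inl i)
      rw [G_mulVec_inl_const hb hl1' hl2' y i] at h
      simpa using h
    have hcolEq : ∀ j, ((r:ℚ) - l3) * y (Sum.inr j) + l3 * (∑ j', y (Sum.inr j'))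
        + l1 * (∑ i, y (Sum.inl i)) = 0 := fun j => by
      have h := congrFun hGy (Sum.inr j)
      rw [G_mulVec_inr_const hb hl1' hl3' y j] at h
      simpa using h
    have hcne : (c:ℚ) - l2 ≠ 0 := ne_of_gt (by linarith)
    have hrne : (r:ℚ) - l3 ≠ 0 := ne_of_gt (by linarith)
    have hconst_row : ∀ i i', y (Sum.inl i) = y (Sum.inl i') := fun i i' => by
      have h1 := hrowEq i; have h2 := hrowEq i'
      exact mul_left_cancel₀ hcne (by linarith)
    have hconst_col : ∀ j j', y (Sum.inr j) = y (Sum.inr j') := fun j j' => by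
      have h1 := hcolEq j; have h2 := hcolEq j'
      exact mul_left_cancel₀ hrne (by linarith)
    have hSx : (∑ i', y (Sum.inl i')) = (r:ℚ) * y (Sum.inl ⟨0, by omega⟩) := by
      rw [Finset.sum_congr rfl (fun i _ => hconst_row i ⟨0, by omega⟩), Finset.sum_const,
        Finset.card_univ, Fintype.card_fin, nsmul_eq_mul]
    have hSz : (∑ j', y (Sum.inr j')) = (c:ℚ) * y (Sum.inr ⟨0, by omega⟩) := by
      rw [Finset.sum_congr rfl (fun j _ => hconst_col j ⟨0, by omega⟩), Finset.sum_const,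
        Finset.card_univ, Fintype.card_fin, nsmul_eq_mul]
    set α := y (Sum.inl ⟨0, by omega⟩) with hα
    set β := y (Sum.inr ⟨0, by omega⟩) with hβ
    have hkey : (c:ℚ) * e * (α + β) = 0 := by
      have h := hrowEq ⟨0, by omega⟩
      rw [hSx, hSz] at h
      linear_combination h - α * hL2 - ((c:ℚ) * β) * hL1
    have hce : (c:ℚ) * e ≠ 0 := ne_of_gt (mul_pos hc0 he_pos)
    have hβα : β = -α := by
      have := (mul_eq_zero.1 hkey).resolve_left hce
      linarith
    refine Submodule.mem_span_singleton.2 ⟨α, ?_⟩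
    funext p
    cases p with
    | inl i =>
      have : y (Sum.inl i) = α := hconst_row i ⟨0, by omega⟩
      simp [wV, this]
    | inr j =>
      have : y (Sum.inr j) = β := hconst_col j ⟨0, by omega⟩
      simp [wV, this, hβα]
  · rw [Submodule.span_le, Set.singleton_subset_iff]
    exact LinearMap.mem_ker.2 (by rw [Matrix.mulVecLin_apply]; exact XM_mulVec_wV hb)

lemma wV_ne_zero (hr0 : 0 < r) : wV r c ≠ (0 : Fin r ⊕ Fin c → ℚ) := fun h => by
  have := congrFun h (Sum.inl ⟨0, hr0⟩)
  simp [wV] at this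

lemma triple_lower (hr : 2 ≤ r) (hc : 2 ≤ c) (T : Fin r × Fin c → Fin v)
    (hT : IsTripleArray T) (hv : max r c < v) : r + c - 1 ≤ v := by
  have hvr : r < v := lt_of_le_of_lt (le_max_left r c) hv
  have hvc : c < v := lt_of_le_of_lt (le_max_right r c) hv
  have hker := triple_ker hr hc hT hvr hvc
  have hrn := LinearMap.finrank_range_add_finrank_ker ((XM T).mulVecLin)
  rw [hker, finrank_span_singleton (wV_ne_zero (by omega)),
    Module.finrank_fintype_fun_eq_card, Fintype.card_sum, Fintype.card_fin,
    Fintype.card_fin] at hrn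
  have hle : Module.finrank ℚ (LinearMap.range (XM T).mulVecLin) ≤ v := by
    have h := Submodule.finrank_le (LinearMap.range (XM T).mulVecLin)
    rwa [Module.finrank_fintype_fun_eq_card, Fintype.card_fin] at h
  omega

lemma rowPair_cast (T : Fin r × Fin c → Fin v) (a b : Fin v) :
    (rowPairCount T a b : ℚ)
      = ∑ i, (if a ∈ rowSet T i then (1:ℚ) else 0) * (if b ∈ rowSet T i then 1 else 0) := by
  rw [rowPairCount, ← Finset.sum_boole]
  exact Finset.sum_congr rfl fun i _ => (ite_mul_ite _ _).symm

lemma colPair_cast (T : Fin r × Fin c → Fin v) (a b : Fin v) :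
    (colPairCount T a b : ℚ)
      = ∑ j, (if a ∈ colSet T j then (1:ℚ) else 0) * (if b ∈ colSet T j then 1 else 0) := by
  rw [colPairCount, ← Finset.sum_boole]
  exact Finset.sum_congr rfl fun j _ => (ite_mul_ite _ _).symm

lemma rowPair_self (T : Fin r × Fin c → Fin v) (a : Fin v) :
    rowPairCount T a a = krow T a := by
  rw [rowPairCount, krow]
  congr 1
  exact Finset.filter_congr fun i _ => by simp

lemma colPair_self (T : Fin r × Fin c → Fin v) (a : Fin v) :
    colPairCount T a a = kcol T a := by
  rw [colPairCount, kcol]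
  congr 1
  exact Finset.filter_congr fun j _ => by simp

lemma sum_rowPair {T : Fin r × Fin c → Fin v} (hb : IsBinaryDesign T) (a : Fin v) :
    (∑ b, (rowPairCount T a b : ℚ)) = (c:ℚ) * krow T a := by
  calc (∑ b, (rowPairCount T a b : ℚ))
      = ∑ b, ∑ i, (if a ∈ rowSet T i then (1:ℚ) else 0) * (if b ∈ rowSet T i then 1 else 0) :=
        Finset.sum_congr rfl fun b _ => rowPair_cast T a b
    _ = ∑ i, ∑ b, (if a ∈ rowSet T i then (1:ℚ) else 0) * (if b ∈ rowSet T i then 1 else 0) :=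
        Finset.sum_comm
    _ = ∑ i, (if a ∈ rowSet T i then (1:ℚ) else 0) * c := by
        refine Finset.sum_congr rfl fun i _ => ?_
        rw [← Finset.mul_sum, sum_ind, rowSet_card hb]
    _ = (c:ℚ) * krow T a := by
        rw [← Finset.sum_mul, ← krow_cast, mul_comm]

lemma sum_colPair {T : Fin r × Fin c → Fin v} (hb : IsBinaryDesign T) (a : Fin v) :
    (∑ b, (colPairCount T a b : ℚ)) = (r:ℚ) * kcol T a := by
  calc (∑ b, (colPairCount T a b : ℚ))
      = ∑ b, ∑ j, (if a ∈ colSet T j then (1:ℚ) else 0) * (if b ∈ colSet T j then 1 else 0) :=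
        Finset.sum_congr rfl fun b _ => colPair_cast T a b
    _ = ∑ j, ∑ b, (if a ∈ colSet T j then (1:ℚ) else 0) * (if b ∈ colSet T j then 1 else 0) :=
        Finset.sum_comm
    _ = ∑ j, (if a ∈ colSet T j then (1:ℚ) else 0) * r := by
        refine Finset.sum_congr rfl fun j _ => ?_
        rw [← Finset.mul_sum, sum_ind, colSet_card hb]
    _ = (r:ℚ) * kcol T a := by
        rw [← Finset.sum_mul, ← kcol_cast, mul_comm]

lemma grid_krow (hr : 2 ≤ r) (hc : 2 ≤ c) {T : Fin r × Fin c → Fin v}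
    (hb : IsBinaryDesign T) (h2 : 2 ≤ v)
    (hpair : ∀ a b : Fin v, a ≠ b →
      ((rowPairCount T a b : ℚ) + (colPairCount T a b : ℚ) = muGrid r c v))
    (a : Fin v) : (krow T a : ℚ) = avgRepl r c v := by
  have hkk : (kcol T a : ℚ) = (krow T a : ℚ) := by
    rw [← repl_eq_kcol hb, repl_eq_krow hb]
  have hsum : (∑ b ∈ Finset.univ.erase a, ((rowPairCount T a b : ℚ) + (colPairCount T a b : ℚ)))
      = ((v:ℚ) - 1) * muGrid r c v := by
    have := sum_erase_const a
      (fun b => ((rowPairCount T a b : ℚ) + (colPairCount T a b : ℚ))) (muGrid r c v)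
      (fun b hba => hpair a b (Ne.symm hba))
    rwa [Fintype.card_fin] at this
  rw [Finset.sum_erase_eq_sub (Finset.mem_univ a), Finset.sum_add_distrib,
    sum_rowPair hb, sum_colPair hb, rowPair_self, colPair_self, hkk] at hsum
  -- hsum : c * krow + r * krow - (krow + krow) = (v-1) * muGrid
  have key : (krow T a : ℚ) * ((r:ℚ) + (c:ℚ) - 2) = ((v:ℚ) - 1) * muGrid r c v := by
    linarith
  have hv1 : ((v:ℚ) - 1) ≠ 0 := by
    have : (2:ℚ) ≤ (v:ℚ) := by exact_mod_cast h2
    linarith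
  have hrc2 : ((r:ℚ) + (c:ℚ) - 2) ≠ 0 := by
    have h1 : (2:ℚ) ≤ (r:ℚ) := by exact_mod_cast hr
    have h2 : (2:ℚ) ≤ (c:ℚ) := by exact_mod_cast hc
    linarith
  rw [muGrid, mul_div_assoc, mul_comm ((v:ℚ)-1), mul_assoc,
    div_mul_cancel₀ _ hv1] at key
  exact mul_right_cancel₀ hrc2 key

lemma grid_equirepl (hr : 2 ≤ r) (hc : 2 ≤ c) {T : Fin r × Fin c → Fin v}
    (hb : IsBinaryDesign T) (h2 : 2 ≤ v)
    (hpair : ∀ a b : Fin v, a ≠ b →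
      ((rowPairCount T a b : ℚ) + (colPairCount T a b : ℚ) = muGrid r c v)) :
    IsEquireplicate T := by
  have hk := grid_krow hr hc hb h2 hpair
  constructor
  · have h0 : avgRepl r c v = ((krow T ⟨0, by omega⟩ : ℕ) : ℚ) := (hk _).symm
    rw [h0]
    exact Rat.den_natCast _
  · intro s
    rw [repl_eq_krow hb]
    exact hk s

/-- generic: if `M = X Xᵀ` has constant diagonal `d` and constant off-diagonal `m`
with `m ≥ 0` and `d > m`, then `X` is surjective (as a linear map). -/
lemma M_mulVec_formula {d m : ℚ} (M : Matrix (Fin v) (Fin v) ℚ)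
    (hentry : ∀ a b : Fin v, M a b = if a = b then d else m) (y : Fin v → ℚ) (a : Fin v) :
    (M.mulVec y) a = (d - m) * y a + m * (∑ b, y b) := by
  rw [Matrix.mulVec, dotProduct]
  have h : ∀ b, M a b * y b = m * y b + (if a = b then (d - m) * y b else 0) := by
    intro b
    rw [hentry]
    by_cases hab : a = b <;> simp [hab] <;> ring
  rw [Finset.sum_congr rfl fun b _ => h b, Finset.sum_add_distrib, ← Finset.mul_sum,
    Finset.sum_ite_eq]
  simp
  ring

lemma M_inj {d m : ℚ} (hm : 0 ≤ m) (hdm : m < d) (M : Matrix (Fin v) (Fin v) ℚ)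
    (hentry : ∀ a b : Fin v, M a b = if a = b then d else m)
    (y : Fin v → ℚ) (hy : M.mulVec y = 0) : y = 0 := by
  have hcomp : ∀ a, (d - m) * y a + m * (∑ b, y b) = 0 := fun a => by
    have h := congrFun hy a
    rwa [M_mulVec_formula M hentry] at h
  have hdm0 : d - m ≠ 0 := ne_of_gt (by linarith)
  have hconst : ∀ a a', y a = y a' := fun a a' => by
    have h1 := hcomp a; have h2 := hcomp a'
    exact mul_left_cancel₀ hdm0 (by linarith)
  funext a
  have hS : (∑ b, y b) = (v:ℚ) * y a := by
    rw [Finset.sum_congr rfl fun b _ => hconst b a, Finset.sum_const, Finset.card_univ,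
      Fintype.card_fin, nsmul_eq_mul]
  have h := hcomp a
  rw [hS] at h
  have hv0 : (0:ℚ) ≤ (v:ℚ) := by positivity
  have hcoef : 0 < (d - m) + m * (v:ℚ) := by nlinarith
  have : ((d - m) + m * (v:ℚ)) * y a = 0 := by linarith [h]
  have := (mul_eq_zero.1 this).resolve_left (ne_of_gt hcoef)
  simpa using this

/-- If `X Xᵀ` is injective then `X` is surjective. -/
lemma X_surj_of_M_inj {T : Fin r × Fin c → Fin v}
    (hMinj : ∀ y : Fin v → ℚ, (XM T * (XM T)ᵀ).mulVec y = 0 → y = 0) :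
    LinearMap.range (XM T).mulVecLin = ⊤ := by
  rw [LinearMap.range_eq_top]
  have hinj : Function.Injective ((XM T * (XM T)ᵀ).mulVecLin) := by
    intro y1 y2 h12
    have h0 : (XM T * (XM T)ᵀ).mulVec (y1 - y2) = 0 := by
      rw [Matrix.mulVec_sub]
      have : (XM T * (XM T)ᵀ).mulVec y1 = (XM T * (XM T)ᵀ).mulVec y2 := by
        simp only [Matrix.mulVecLin_apply] at h12
        exact h12
      rw [this, sub_self]
    exact sub_eq_zero.1 (hMinj _ h0)
  have hs := (LinearMap.injective_iff_surjective).1 hinj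
  intro z
  obtain ⟨y, hy⟩ := hs z
  exact ⟨(XM T)ᵀ.mulVec y, by
    rw [Matrix.mulVecLin_apply, Matrix.mulVec_mulVec]
    simp only [Matrix.mulVecLin_apply] at hy
    exact hy⟩

/-- part (b): a balanced grid has `v ≤ r + c - 1`. -/
lemma grid_upper (hr : 2 ≤ r) (hc : 2 ≤ c) (T : Fin r × Fin c → Fin v)
    (hg : IsBalancedGrid T) : v ≤ r + c - 1 := by
  obtain ⟨hb, hden, hpair⟩ := hg
  rcases Nat.lt_or_ge v 2 with h2 | h2
  · omega
  by_contra hlt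
  push_neg at hlt
  have hvge : r + c ≤ v := by omega
  have heq := grid_equirepl hr hc hb h2 hpair
  set e := avgRepl r c v with hedef
  set μ := muGrid r c v with hμdef
  have he_pos : 0 < e := avgRepl_pos (by omega) (by omega) (by omega)
  have hv1p : (0:ℚ) < (v:ℚ) - 1 := by
    have : (2:ℚ) ≤ (v:ℚ) := by exact_mod_cast h2
    linarith
  have hmu : μ * ((v:ℚ) - 1) = e * ((r:ℚ) + (c:ℚ) - 2) := by
    rw [hμdef, muGrid, hedef, div_mul_cancel₀ _ (ne_of_gt hv1p)]
  have hvq : (r:ℚ) + (c:ℚ) ≤ (v:ℚ) := by exact_mod_cast hvge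
  have h2e : μ < 2 * e := by nlinarith
  have hmu_nonneg : 0 ≤ μ := by
    have hne : (⟨0, by omega⟩ : Fin v) ≠ ⟨1, by omega⟩ := by
      intro h
      have := congrArg Fin.val h
      simp at this
    rw [← hpair _ _ hne]
    positivity
  have hentry : ∀ a b : Fin v, (XM T * (XM T)ᵀ) a b = if a = b then 2*e else μ := by
    intro a b
    rw [M_entry]
    by_cases hab : a = b
    · rw [if_pos hab, hab, rowPair_self, colPair_self, ← repl_eq_krow hb,
        ← repl_eq_kcol hb, heq.2 b, ← hedef]
      ring
    · rw [if_neg hab]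
      exact hpair a b hab
  have hMinj := M_inj hmu_nonneg h2e _ hentry
  have hsurj := X_surj_of_M_inj hMinj
  have hrn := LinearMap.finrank_range_add_finrank_ker ((XM T).mulVecLin)
  rw [hsurj, finrank_top, Module.finrank_fintype_fun_eq_card, Fintype.card_fin,
    Module.finrank_fintype_fun_eq_card, Fintype.card_sum, Fintype.card_fin,
    Fintype.card_fin] at hrn
  have hker1 : 1 ≤ Module.finrank ℚ (LinearMap.ker (XM T).mulVecLin) := by
    have hsp : Submodule.span ℚ {wV r c} ≤ LinearMap.ker (XM T).mulVecLin := by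
      rw [Submodule.span_le, Set.singleton_subset_iff]
      exact LinearMap.mem_ker.2 (by rw [Matrix.mulVecLin_apply]; exact XM_mulVec_wV hb)
    have := Submodule.finrank_mono hsp
    rwa [finrank_span_singleton (wV_ne_zero (by omega))] at this
  omega

lemma cast_v_eq (hr : 2 ≤ r) (hc : 2 ≤ c) (hv : v = r + c - 1) :
    (v:ℚ) = (r:ℚ) + (c:ℚ) - 1 := by
  subst hv
  push_cast [Nat.cast_sub (show 1 ≤ r + c by omega)]
  ring

lemma avgRepl_mul_v (hv0 : 0 < v) : avgRepl r c v * v = (r:ℚ) * c := by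
  unfold avgRepl
  have : (v:ℚ) ≠ 0 := Nat.cast_ne_zero.2 (by omega)
  field_simp

/-- triple array at v = r+c-1 is a balanced grid -/
lemma triple_to_grid (hr : 2 ≤ r) (hc : 2 ≤ c) (hv : v = r + c - 1)
    (T : Fin r × Fin c → Fin v) (hT : IsTripleArray T) : IsBalancedGrid T := by
  obtain ⟨hb, he, hx1, hx2, hx3⟩ := id hT
  obtain ⟨l1, hl1⟩ := hx1
  obtain ⟨l2, hl2⟩ := hx2
  obtain ⟨l3, hl3⟩ := hx3
  have hvr : r < v := by omega
  have hvc : c < v := by omega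
  set e := avgRepl r c v with hedef
  have hL1 := triple_L1 hr hc hb he hl1
  have hL2 := triple_L2 hr hc hb he hl2
  have hL3 := triple_L3 hr hc hb he hl3
  have hvq : (v:ℚ) = (r:ℚ) + (c:ℚ) - 1 := cast_v_eq hr hc hv
  have hev : e * v = (r:ℚ) * c := avgRepl_mul_v (by omega)
  have hr1 : (1:ℚ) < r := by exact_mod_cast (show 1 < r by omega)
  have hc1 : (1:ℚ) < c := by exact_mod_cast (show 1 < c by omega)
  have hc_l2 : (c:ℚ) - l2 = e := by
    have hkey : ((r:ℚ) - 1) * ((c:ℚ) - l2) = ((r:ℚ) - 1) * e := by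
      linear_combination (-1 : ℚ) * hL2 - hev + e * hvq
    exact mul_left_cancel₀ (by linarith : ((r:ℚ) - 1) ≠ 0) hkey
  have hr_l3 : (r:ℚ) - l3 = e := by
    have hkey : ((c:ℚ) - 1) * ((r:ℚ) - l3) = ((c:ℚ) - 1) * e := by
      linear_combination (-1 : ℚ) * hL3 - hev + e * hvq
    exact mul_left_cancel₀ (by linarith : ((c:ℚ) - 1) ≠ 0) hkey
  have hl1' : ∀ (i : Fin r) (j : Fin c), ((rowSet T i ∩ colSet T j).card : ℚ) = (l1:ℚ) :=
    fun i j => by rw [hl1 i j]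
  have hl2' : ∀ i i' : Fin r, i ≠ i' → ((rowSet T i ∩ rowSet T i').card : ℚ) = (l2:ℚ) :=
    fun i i' h => by rw [hl2 i i' h]
  have hl3' : ∀ j j' : Fin c, j ≠ j' → ((colSet T j ∩ colSet T j').card : ℚ) = (l3:ℚ) :=
    fun j j' h => by rw [hl3 j j' h]
  have hkrow := equi_krow hb he
  have hkcol := equi_kcol hb he
  -- X is surjective
  have hker := triple_ker hr hc hT hvr hvc
  have hrange : LinearMap.range (XM T).mulVecLin = ⊤ := by
    apply Submodule.eq_top_of_finrank_eq
    have hrn := LinearMap.finrank_range_add_finrank_ker ((XM T).mulVecLin)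
    rw [hker, finrank_span_singleton (wV_ne_zero (by omega)),
      Module.finrank_fintype_fun_eq_card, Fintype.card_sum, Fintype.card_fin,
      Fintype.card_fin] at hrn
    rw [Module.finrank_fintype_fun_eq_card, Fintype.card_fin]
    omega
  -- the key identity  M (X y) = e (X y) + e (sum of X y) 1
  have hMX : ∀ y : Fin r ⊕ Fin c → ℚ,
      (XM T * (XM T)ᵀ).mulVec ((XM T).mulVec y)
        = e • ((XM T).mulVec y) + (e * ∑ a, ((XM T).mulVec y) a) • (fun _ : Fin v => (1:ℚ)) := by
    intro y
    rw [← Matrix.mulVec_mulVec, Matrix.mulVec_mulVec y (XM T)ᵀ (XM T)]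
    set Sx := ∑ i', y (Sum.inl i') with hSx
    set Sz := ∑ j', y (Sum.inr j') with hSz
    funext a
    have hXGa : ((XM T).mulVec (((XM T)ᵀ * XM T).mulVec y)) a
        = ∑ i, XM T a (Sum.inl i) * (((c:ℚ) - l2) * y (Sum.inl i) + l2 * Sx + l1 * Sz)
          + ∑ j, XM T a (Sum.inr j) * (((r:ℚ) - l3) * y (Sum.inr j) + l3 * Sz + l1 * Sx) := by
      rw [Matrix.mulVec, dotProduct, Fintype.sum_sum_type]
      congr 1
      · exact Finset.sum_congr rfl fun i _ => by
          rw [G_mulVec_inl_const hb hl1' hl2' y i]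
      · exact Finset.sum_congr rfl fun j _ => by
          rw [G_mulVec_inr_const hb hl1' hl3' y j]
    rw [hXGa]
    have expand1 : (∑ i, XM T a (Sum.inl i) * (((c:ℚ) - l2) * y (Sum.inl i) + l2 * Sx + l1 * Sz))
        = ((c:ℚ) - l2) * (∑ i, XM T a (Sum.inl i) * y (Sum.inl i))
          + ((l2:ℚ) * Sx + l1 * Sz) * (krow T a : ℚ) := by
      rw [Finset.sum_congr rfl (fun i _ => show XM T a (Sum.inl i) * (((c:ℚ) - l2) * y (Sum.inl i) + l2 * Sx + l1 * Sz)
            = ((c:ℚ) - l2) * (XM T a (Sum.inl i) * y (Sum.inl i))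
              + ((l2:ℚ) * Sx + l1 * Sz) * XM T a (Sum.inl i) from by ring),
        Finset.sum_add_distrib, ← Finset.mul_sum, ← Finset.mul_sum]
      congr 1
      rw [krow_cast]
      simp only [XM_apply_inl]
    have expand2 : (∑ j, XM T a (Sum.inr j) * (((r:ℚ) - l3) * y (Sum.inr j) + l3 * Sz + l1 * Sx))
        = ((r:ℚ) - l3) * (∑ j, XM T a (Sum.inr j) * y (Sum.inr j))
          + ((l3:ℚ) * Sz + l1 * Sx) * (kcol T a : ℚ) := by
      rw [Finset.sum_congr rfl (fun j _ => show XM T a (Sum.inr j) * (((r:ℚ) - l3) * y (Sum.inr j) + l3 * Sz + l1 * Sx)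
            = ((r:ℚ) - l3) * (XM T a (Sum.inr j) * y (Sum.inr j))
              + ((l3:ℚ) * Sz + l1 * Sx) * XM T a (Sum.inr j) from by ring),
        Finset.sum_add_distrib, ← Finset.mul_sum, ← Finset.mul_sum]
      congr 1
      rw [kcol_cast]
      simp only [XM_apply_inr]
    rw [expand1, expand2, hkrow a, hkcol a, ← hedef]
    have hXya : ((XM T).mulVec y) a
        = (∑ i, XM T a (Sum.inl i) * y (Sum.inl i)) + (∑ j, XM T a (Sum.inr j) * y (Sum.inr j)) := by
      rw [Matrix.mulVec, dotProduct, Fintype.sum_sum_type]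
    have hsum := sum_XM_mulVec hb y
    rw [← hSx, ← hSz] at hsum
    have hRHS : (e • ((XM T).mulVec y) + (e * ∑ a, ((XM T).mulVec y) a) • (fun _ : Fin v => (1:ℚ))) a
        = e * (((XM T).mulVec y) a) + e * ((c:ℚ) * Sx + (r:ℚ) * Sz) := by
      simp only [Pi.add_apply, Pi.smul_apply, smul_eq_mul]
      rw [hsum]
      ring
    rw [hRHS, hXya]
    -- remaining: pure algebra with hc_l2, hr_l3, hL1
    have hl2e : (l2:ℚ) = (c:ℚ) - e := by linarith
    have hl3e : (l3:ℚ) = (r:ℚ) - e := by linarith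
    rw [hc_l2, hr_l3, hl2e, hl3e, hL1, ← hedef]
    ring
  -- transfer to all vectors
  have hM : ∀ z : Fin v → ℚ,
      (XM T * (XM T)ᵀ).mulVec z = e • z + (e * ∑ a, z a) • (fun _ : Fin v => (1:ℚ)) := by
    intro z
    have : z ∈ LinearMap.range (XM T).mulVecLin := by rw [hrange]; trivial
    obtain ⟨y, hy⟩ := this
    rw [Matrix.mulVecLin_apply] at hy
    rw [← hy]
    exact hMX y
  -- entries
  have hpair : ∀ a b : Fin v, a ≠ b →
      (rowPairCount T a b : ℚ) + (colPairCount T a b : ℚ) = e := by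
    intro a b hab
    have h := congrFun (hM (Pi.single b 1)) a
    rw [mulVec_single_old] at h
    simp only [Pi.add_apply, Pi.smul_apply, smul_eq_mul, Pi.single_apply] at h
    rw [Finset.sum_ite_eq'] at h
    simp [if_neg hab] at h
    rw [← M_entry, h]
  have hmu_e : muGrid r c v = e := by
    have hrc2 : ((r:ℚ) + (c:ℚ) - 2) ≠ 0 := by linarith
    rw [muGrid, hvq, show (r:ℚ) + (c:ℚ) - 1 - 1 = (r:ℚ) + (c:ℚ) - 2 from by ring,
      mul_div_assoc, div_self hrc2, mul_one, hedef]
  refine ⟨hb, ?_, ?_⟩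
  · rw [hmu_e, hedef]
    exact he.1
  · intro a b hab
    rw [hmu_e]
    exact hpair a b hab

lemma grid_to_triple (hr : 2 ≤ r) (hc : 2 ≤ c) (hv : v = r + c - 1)
    (T : Fin r × Fin c → Fin v) (hg : IsBalancedGrid T) : IsTripleArray T := by
  obtain ⟨hb, hden, hpair⟩ := hg
  have h2 : 2 ≤ v := by omega
  have heq := grid_equirepl hr hc hb h2 hpair
  set e := avgRepl r c v with hedef
  have hvq : (v:ℚ) = (r:ℚ) + (c:ℚ) - 1 := cast_v_eq hr hc hv
  have hev : e * v = (r:ℚ) * c := avgRepl_mul_v (by omega)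
  have he_pos : 0 < e := avgRepl_pos (by omega) (by omega) (by omega)
  have hr1 : (1:ℚ) < r := by exact_mod_cast (show 1 < r by omega)
  have hc1 : (1:ℚ) < c := by exact_mod_cast (show 1 < c by omega)
  have hrc2 : ((r:ℚ) + (c:ℚ) - 2) ≠ 0 := by linarith
  have hrcpos : (0:ℚ) < (r:ℚ) + (c:ℚ) := by linarith
  have hmu_e : muGrid r c v = e := by
    rw [muGrid, hvq, show (r:ℚ) + (c:ℚ) - 1 - 1 = (r:ℚ) + (c:ℚ) - 2 from by ring,
      mul_div_assoc, div_self hrc2, mul_one, hedef]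
  have hentry : ∀ a b : Fin v, (XM T * (XM T)ᵀ) a b = if a = b then 2*e else e := by
    intro a b
    rw [M_entry]
    by_cases hab : a = b
    · rw [if_pos hab, hab, rowPair_self, colPair_self, ← repl_eq_krow hb,
        ← repl_eq_kcol hb, heq.2 b, ← hedef]
      ring
    · rw [if_neg hab, ← hmu_e]
      exact hpair a b hab
  have hMinj := M_inj (le_of_lt he_pos) (by linarith : e < 2*e) _ hentry
  have hsurj := X_surj_of_M_inj hMinj
  have hker : LinearMap.ker (XM T).mulVecLin = Submodule.span ℚ {wV r c} := by
    have hrn := LinearMap.finrank_range_add_finrank_ker ((XM T).mulVecLin)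
    rw [hsurj, finrank_top, Module.finrank_fintype_fun_eq_card, Fintype.card_fin,
      Module.finrank_fintype_fun_eq_card, Fintype.card_sum, Fintype.card_fin,
      Fintype.card_fin] at hrn
    have hsp : Submodule.span ℚ {wV r c} ≤ LinearMap.ker (XM T).mulVecLin := by
      rw [Submodule.span_le, Set.singleton_subset_iff]
      exact LinearMap.mem_ker.2 (by rw [Matrix.mulVecLin_apply]; exact XM_mulVec_wV hb)
    exact (Submodule.eq_of_le_of_finrank_le hsp (by
      rw [finrank_span_singleton (wV_ne_zero (show 0 < r by omega))]
      omega)).symm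
  have hM : ∀ z : Fin v → ℚ, (XM T * (XM T)ᵀ).mulVec z
      = e • z + (e * ∑ a, z a) • (fun _ : Fin v => (1:ℚ)) := by
    intro z
    funext a
    rw [M_mulVec_formula _ hentry]
    simp only [Pi.add_apply, Pi.smul_apply, smul_eq_mul]
    ring
  have hwG : ∀ y : Fin r ⊕ Fin c → ℚ,
      dotProduct (wV r c) ((((XM T)ᵀ * XM T)).mulVec y) = 0 := by
    intro y
    rw [dotProduct_mulVec]
    have hz : (wV r c) ᵥ* ((XM T)ᵀ * XM T) = 0 := by
      rw [← Matrix.vecMul_vecMul, Matrix.vecMul_transpose, XM_mulVec_wV hb,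
        Matrix.zero_vecMul]
    rw [hz, zero_dotProduct]
  have hww : dotProduct (wV r c) (wV r c) = (r:ℚ) + (c:ℚ) := by
    rw [dotProduct, Fintype.sum_sum_type]
    simp [wV]
  have hkey : ∀ y : Fin r ⊕ Fin c → ℚ,
      ((c:ℚ) * (∑ i, y (Sum.inl i)) + (r:ℚ) * (∑ j, y (Sum.inr j))) = 0 →
      ∃ t : ℚ, ((XM T)ᵀ * XM T).mulVec y = e • y + t • (wV r c) ∧
        e * dotProduct (wV r c) y + t * ((r:ℚ) + (c:ℚ)) = 0 := by
    intro y hu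
    have hXG : (XM T).mulVec (((XM T)ᵀ * XM T).mulVec y) = (XM T).mulVec (e • y) := by
      have h1 : (XM T).mulVec (((XM T)ᵀ * XM T).mulVec y)
          = (XM T * (XM T)ᵀ).mulVec ((XM T).mulVec y) := by
        rw [Matrix.mulVec_mulVec, Matrix.mulVec_mulVec, Matrix.mul_assoc]
      rw [h1, hM]
      have hsum : (∑ a, ((XM T).mulVec y) a) = 0 := by
        rw [sum_XM_mulVec hb y]; exact hu
      rw [hsum, mul_zero, zero_smul, add_zero, Matrix.mulVec_smul]
    have hmem : (((XM T)ᵀ * XM T).mulVec y - e • y) ∈ LinearMap.ker (XM T).mulVecLin := by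
      rw [LinearMap.mem_ker, Matrix.mulVecLin_apply, Matrix.mulVec_sub, hXG,
        Matrix.mulVec_smul, sub_self]
    rw [hker] at hmem
    obtain ⟨t, ht⟩ := Submodule.mem_span_singleton.1 hmem
    have hE : ((XM T)ᵀ * XM T).mulVec y = e • y + t • (wV r c) := by
      rw [ht]; abel
    refine ⟨t, hE, ?_⟩
    have hdot := congrArg (dotProduct (wV r c)) hE
    rw [hwG, dotProduct_add, dotProduct_smul, dotProduct_smul,
      hww] at hdot
    simp only [smul_eq_mul] at hdot
    linarith
  -- row-row intersections
  have hrr : ∀ i1 i2 : Fin r, i1 ≠ i2 →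
      ((rowSet T i1 ∩ rowSet T i2).card : ℚ) = (c:ℚ) - e := by
    intro i1 i2 hne
    set y : Fin r ⊕ Fin c → ℚ :=
      Pi.single (Sum.inl i1) (1:ℚ) - Pi.single (Sum.inl i2) 1 with hydef
    have hu : ((c:ℚ) * (∑ i, y (Sum.inl i)) + (r:ℚ) * (∑ j, y (Sum.inr j))) = 0 := by
      simp [hydef, Pi.single_apply, Finset.sum_sub_distrib]
    obtain ⟨t, hE, htv⟩ := hkey y hu
    have hwy : dotProduct (wV r c) y = 0 := by
      rw [hydef, dotProduct_sub, dotProduct_single, dotProduct_single]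
      simp [wV]
    rw [hwy, mul_zero, zero_add] at htv
    have ht0 : t = 0 := by
      rcases mul_eq_zero.1 htv with h | h
      · exact h
      · linarith
    have hcomp := congrFun hE (Sum.inl i1)
    rw [hydef] at hcomp
    rw [Matrix.mulVec_sub, mulVec_single_old, mulVec_single_old] at hcomp
    simp only [Pi.sub_apply, Pi.add_apply, Pi.smul_apply, smul_eq_mul,
      Pi.single_apply, mul_one] at hcomp
    rw [G_ll, G_ll, Finset.inter_self, rowSet_card hb] at hcomp
    simp [ht0, wV, hne, Ne.symm hne] at hcomp
    linarith
  -- column-column intersections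
  have hcc : ∀ j1 j2 : Fin c, j1 ≠ j2 →
      ((colSet T j1 ∩ colSet T j2).card : ℚ) = (r:ℚ) - e := by
    intro j1 j2 hne
    set y : Fin r ⊕ Fin c → ℚ :=
      Pi.single (Sum.inr j1) (1:ℚ) - Pi.single (Sum.inr j2) 1 with hydef
    have hu : ((c:ℚ) * (∑ i, y (Sum.inl i)) + (r:ℚ) * (∑ j, y (Sum.inr j))) = 0 := by
      simp [hydef, Pi.single_apply, Finset.sum_sub_distrib]
    obtain ⟨t, hE, htv⟩ := hkey y hu
    have hwy : dotProduct (wV r c) y = 0 := by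
      rw [hydef, dotProduct_sub, dotProduct_single, dotProduct_single]
      simp [wV]
    rw [hwy, mul_zero, zero_add] at htv
    have ht0 : t = 0 := by
      rcases mul_eq_zero.1 htv with h | h
      · exact h
      · linarith
    have hcomp := congrFun hE (Sum.inr j1)
    rw [hydef] at hcomp
    rw [Matrix.mulVec_sub, mulVec_single_old, mulVec_single_old] at hcomp
    simp only [Pi.sub_apply, Pi.add_apply, Pi.smul_apply, smul_eq_mul,
      Pi.single_apply, mul_one] at hcomp
    rw [G_rr, G_rr, Finset.inter_self, colSet_card hb] at hcomp
    simp [ht0, wV, hne, Ne.symm hne] at hcomp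
    linarith
  -- row-column intersections
  have hrc : ∀ (i : Fin r) (j : Fin c),
      ((rowSet T i ∩ colSet T j).card : ℚ) = e := by
    intro i j
    set y : Fin r ⊕ Fin c → ℚ :=
      Pi.single (Sum.inl i) ((r:ℚ)) - Pi.single (Sum.inr j) ((c:ℚ)) with hydef
    have hu : ((c:ℚ) * (∑ i', y (Sum.inl i')) + (r:ℚ) * (∑ j', y (Sum.inr j'))) = 0 := by
      simp [hydef, Pi.single_apply, Finset.sum_sub_distrib]
      ring
    obtain ⟨t, hE, htv⟩ := hkey y hu
    have hwy : dotProduct (wV r c) y = (r:ℚ) + (c:ℚ) := by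
      rw [hydef, dotProduct_sub, dotProduct_single, dotProduct_single]
      simp [wV]
    rw [hwy] at htv
    have ht0 : t = -e := by
      have h0 : (e + t) * ((r:ℚ) + (c:ℚ)) = 0 := by ring_nf; ring_nf at htv; linarith
      rcases mul_eq_zero.1 h0 with h | h
      · linarith
      · linarith
    have hcomp := congrFun hE (Sum.inl i)
    rw [hydef] at hcomp
    rw [Matrix.mulVec_sub, mulVec_single_old, mulVec_single_old] at hcomp
    simp only [Pi.sub_apply, Pi.add_apply, Pi.smul_apply, smul_eq_mul,
      Pi.single_apply] at hcomp
    rw [G_ll, G_lr, Finset.inter_self, rowSet_card hb] at hcomp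
    simp [ht0, wV] at hcomp
    -- hcomp : c * r - card * c = e * r - e
    have hcard : ((rowSet T i ∩ colSet T j).card : ℚ) * c = e * c := by
      have hce : e * c = (c:ℚ) * r - e * r + e := by
        nlinarith [hev, hvq]
      nlinarith [hcomp]
    have hc0 : (c:ℚ) ≠ 0 := by linarith
    exact mul_right_cancel₀ hc0 hcard
  -- assemble the triple array
  refine ⟨hb, heq, ?_, ?_, ?_⟩
  · refine ⟨(rowSet T ⟨0, by omega⟩ ∩ colSet T ⟨0, by omega⟩).card, fun i j => ?_⟩
    have h1 := hrc i j
    have h2 := hrc ⟨0, by omega⟩ ⟨0, by omega⟩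
    exact_mod_cast h1.trans h2.symm
  · have hne : (⟨0, by omega⟩ : Fin r) ≠ ⟨1, by omega⟩ := by
      intro h
      simpa using congrArg Fin.val h
    refine ⟨(rowSet T ⟨0, by omega⟩ ∩ rowSet T ⟨1, by omega⟩).card, fun i1 i2 h12 => ?_⟩
    have h1 := hrr i1 i2 h12
    have h2 := hrr _ _ hne
    exact_mod_cast h1.trans h2.symm
  · have hne : (⟨0, by omega⟩ : Fin c) ≠ ⟨1, by omega⟩ := by
      intro h
      simpa using congrArg Fin.val h
    refine ⟨(colSet T ⟨0, by omega⟩ ∩ colSet T ⟨1, by omega⟩).card, fun j1 j2 h12 => ?_⟩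
    have h1 := hcc j1 j2 h12
    have h2 := hcc _ _ hne
    exact_mod_cast h1.trans h2.symm

end TBG

/-- (a) a triple array with `v > max(r,c)` has `v ≥ r + c − 1`;
(b) a balanced grid has `v ≤ r + c − 1`; (c) for `v = r + c − 1`, triple arrays
and balanced grids coincide. -/
theorem tripleArray_balancedGrid_duality {r c : ℕ} (hr : 2 ≤ r) (hc : 2 ≤ c) :
    (∀ (v : ℕ) (T : Fin r × Fin c → Fin v),
      IsTripleArray T → max r c < v → r + c - 1 ≤ v) ∧
    (∀ (v : ℕ) (T : Fin r × Fin c → Fin v),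
      IsBalancedGrid T → v ≤ r + c - 1) ∧
    (∀ T : Fin r × Fin c → Fin (r + c - 1),
      (IsTripleArray T ↔ IsBalancedGrid T)) := by
    refine ⟨fun v T hT hv => TBG.triple_lower hr hc T hT hv,
    fun v T hg => TBG.grid_upper hr hc T hg,
    fun T => ⟨fun hT => TBG.triple_to_grid hr hc rfl T hT,
      fun hg => TBG.grid_to_triple hr hc rfl T hg⟩⟩
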